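/- Suppose the continued fraction of √(n²+j) (n positive integer, 1 ≤ j ≤ 2n) is [n; 1, 1, …, 1, 2n repeated] with exactly p ≥ 1 ones in the palindromic part. Then p+1 is not divisible by 3, and j = (2n·F_{p-1} + F_{p-2}) / F_p, where Fibonacci numbers are normalized by F₋₁ = 0, F₀ = 1, F_n = F_{n-1} + F_{n-2}. -/

import Mathlib

/-- The sequence of complete quotients of the continued fraction algorithm. -/
noncomputable def cfX (x : ℝ) : ℕ → ℝ
  | 0 => x
  | n + 1 =>
    if cfX x n - ⌊cfX x n⌋ = 0 then 0 else 1 / (cfX x n - ⌊cfX x n⌋)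

/-- The partial quotients (continued fraction expansion) of a real number. -/
noncomputable def cfA (x : ℝ) (n : ℕ) : ℤ := ⌊cfX x n⌋

/-- `fibP m` is the Fibonacci number `F_m` normalized by `F₋₁ = 0`, `F₀ = 1`,
so `F_m = Nat.fib (m+1)`; `fibP m` stands for `F_{m-1}` (i.e. `fibP 0 = F₋₁`). -/
def fibP (m : ℕ) : ℕ := Nat.fib m

/-- Shifted Fibonacci: `Gfib i = F_{i-2}` in the normalization of `fibP`,
i.e. `Gfib 0 = 1`, `Gfib (i+1) = Nat.fib i`. -/
def Gfib : ℕ → ℤ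
  | 0 => 1
  | (i + 1) => Nat.fib i

lemma Gfib_add_two (i : ℕ) : Gfib (i + 2) = Gfib (i + 1) + Gfib i := by
  cases i with
  | zero => simp [Gfib]
  | succ i =>
    show ((Nat.fib (i + 2) : ℤ)) = Nat.fib (i + 1) + Nat.fib i
    rw [Nat.fib_add_two]
    push_cast
    ring

set_option maxHeartbeats 1600000 in
/-- If the continued fraction of `√(n²+j)` is `[n; 1,…,1, 2n repeated]` with `p ≥ 1`
ones, then `3 ∤ p+1` and `j = (2n·F_{p-1} + F_{p-2})/F_p` (with `F₋₁ = 0`, `F₀ = 1`). -/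
theorem sqrt_cf_all_ones (n j p : ℕ) (hn : 0 < n) (hj1 : 1 ≤ j) (hj2 : j ≤ 2 * n)
    (hp : 1 ≤ p)
    (h0 : cfA (Real.sqrt ((n : ℝ) ^ 2 + (j : ℝ))) 0 = n)
    (hones : ∀ i : ℕ, 1 ≤ i → i ≤ p → cfA (Real.sqrt ((n : ℝ) ^ 2 + (j : ℝ))) i = 1)
    (hlast : cfA (Real.sqrt ((n : ℝ) ^ 2 + (j : ℝ))) (p + 1) = 2 * n)
    (hper : ∀ m : ℕ, 1 ≤ m → cfA (Real.sqrt ((n : ℝ) ^ 2 + (j : ℝ))) (m + (p + 1)) = cfA (Real.sqrt ((n : ℝ) ^ 2 + (j : ℝ))) m) :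
    ¬ (3 ∣ (p + 1)) ∧
      (j : ℚ) = (2 * (n : ℚ) * (fibP p : ℚ) + (fibP (p - 1) : ℚ)) / (fibP (p + 1) : ℚ) := by
  clear hper
  set x : ℝ := Real.sqrt ((n : ℝ) ^ 2 + (j : ℝ)) with hxdef
  have hn1 : (1 : ℝ) ≤ (n : ℝ) := by exact_mod_cast hn
  have hj1' : (1 : ℝ) ≤ (j : ℝ) := by exact_mod_cast hj1
  have hNnn : (0 : ℝ) ≤ (n : ℝ) ^ 2 + (j : ℝ) := by positivity
  have hx2 : x ^ 2 = (n : ℝ) ^ 2 + (j : ℝ) := Real.sq_sqrt hNnn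
  have hxpos : 0 ≤ x := Real.sqrt_nonneg _
  have hxgt : (n : ℝ) < x := by
    nlinarith [hx2, hxpos]
  have hxlt : x < (n : ℝ) + 1 := by
    have hj2' : (j : ℝ) ≤ 2 * (n : ℝ) := by exact_mod_cast hj2
    nlinarith [hx2, hxpos]
  have hc0 : cfX x 0 = x := rfl
  have hfloor0 : ⌊x⌋ = (n : ℤ) := by
    simpa [cfA, hc0] using h0
  have hxnotint : ∀ m : ℤ, x ≠ (m : ℝ) := by
    intro m hm
    have h1 : ((n : ℤ) : ℝ) < (m : ℝ) := by rw [← hm]; exact_mod_cast hxgt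
    have h2 : (m : ℝ) < ((n : ℤ) : ℝ) + 1 := by rw [← hm]; exact_mod_cast hxlt
    have h1' : (n : ℤ) < m := by exact_mod_cast h1
    have h2' : m < (n : ℤ) + 1 := by exact_mod_cast h2
    omega
  -- zero propagation
  have hzero : ∀ a b : ℕ, cfX x a = 0 → cfX x (a + b) = 0 := by
    intro a b ha
    induction b with
    | zero => simpa using ha
    | succ b ih =>
      show cfX x ((a + b) + 1) = 0
      rw [cfX, ih]
      norm_num
  have hXne : ∀ k, k ≤ p + 1 → cfX x k ≠ 0 := by
    intro k hk hzk
    have h1 : cfX x (p + 1) = 0 := by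
      have := hzero k (p + 1 - k) hzk
      rwa [Nat.add_sub_cancel' hk] at this
    rw [cfA, h1] at hlast
    simp at hlast
    omega
  have hfrac : ∀ k, k ≤ p → cfX x k - (⌊cfX x k⌋ : ℝ) ≠ 0 := by
    intro k hk h
    apply hXne (k + 1) (by omega)
    rw [cfX, if_pos h]
  have hrec : ∀ k, k ≤ p → cfX x (k + 1) = 1 / (cfX x k - (⌊cfX x k⌋ : ℝ)) := by
    intro k hk
    rw [cfX, if_neg (hfrac k hk)]
  -- main invariant: cfX x k = (x + m)/d with m < x < m + d and d*e = N - m²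
  have main : ∀ k, 1 ≤ k → k ≤ p + 1 →
      ∃ m d e : ℤ, (m : ℝ) < x ∧ x < (m : ℝ) + (d : ℝ) ∧
        (d : ℝ) * (e : ℝ) = (n : ℝ) ^ 2 + (j : ℝ) - (m : ℝ) ^ 2 ∧
        cfX x k * (d : ℝ) = x + (m : ℝ) := by
    intro k hk
    induction k, hk using Nat.le_induction with
    | base =>
      intro _
      refine ⟨n, j, 1, hxgt, ?_, by push_cast; ring, ?_⟩
      · push_cast
        nlinarith [hx2, hxpos]
      · have h1 : cfX x 1 = 1 / (x - (n : ℝ)) := by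
          rw [hrec 0 (Nat.zero_le p), hc0, hfloor0]
          norm_cast
        have hne : x - (n : ℝ) ≠ 0 := sub_ne_zero.mpr (hxnotint n)
        rw [h1]
        push_cast
        field_simp
        linear_combination -hx2
    | succ k hk ih =>
      intro hk2
      obtain ⟨m, d, e, hm, hmd, hde, heq⟩ := ih (by omega)
      have hdpos : (0 : ℝ) < (d : ℝ) := by linarith
      have hdz : (d : ℝ) ≠ 0 := ne_of_gt hdpos
      have hfl : ⌊cfX x k⌋ = 1 := hones k (by omega) (by omega)
      have hge1 : (1 : ℝ) ≤ cfX x k := by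
        have := Int.floor_le (cfX x k)
        rw [hfl] at this
        exact_mod_cast this
      have hge : (d : ℝ) ≤ x + (m : ℝ) := by nlinarith [heq, hge1, hdpos]
      have hgt : (d : ℝ) - (m : ℝ) < x := by
        rcases lt_or_eq_of_le (by linarith : (d : ℝ) - (m : ℝ) ≤ x) with h | h
        · exact h
        · exact absurd (by push_cast; linarith : x = ((d - m : ℤ) : ℝ)) (hxnotint (d - m))
      refine ⟨d - m, e + 2 * m - d, d, by push_cast; linarith, ?_, by push_cast; linear_combination hde, ?_⟩
      · -- x < (d - m) + (e + 2m - d) = e + m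
        have h1 : (x - (m : ℝ)) * (x + (m : ℝ) - d) > 0 :=
          mul_pos (by linarith) (by linarith)
        push_cast
        nlinarith [h1, hde, hdpos]
      · have hnext : cfX x (k + 1) = 1 / (cfX x k - 1) := by
          rw [hrec k (by omega), hfl]
          norm_num
        have hfne : x + (m : ℝ) - (d : ℝ) ≠ 0 := by linarith [hgt]
        have hXk : cfX x k = (x + (m : ℝ)) / (d : ℝ) := by
          rw [eq_div_iff hdz]; exact heq
        rw [hnext, hXk]
        push_cast
        rw [div_sub_one hdz, one_div_div, div_mul_eq_mul_div, div_eq_iff hfne]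
        linear_combination hde - hx2
  -- final step of the invariant: cfX x (p+1) = x + n
  obtain ⟨m, d, e, hm, hmd, hde, heq⟩ := main (p + 1) (by omega) le_rfl
  have hdpos : (0 : ℝ) < (d : ℝ) := by linarith
  have hfl : ⌊cfX x (p + 1)⌋ = 2 * (n : ℤ) := by
    simpa [cfA] using hlast
  have hge : (2 * (n : ℝ)) ≤ cfX x (p + 1) := by
    have := Int.floor_le (cfX x (p + 1))
    rw [hfl] at this
    exact_mod_cast this
  have hlt : cfX x (p + 1) < 2 * (n : ℝ) + 1 := by
    have := Int.lt_floor_add_one (cfX x (p + 1))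
    rw [hfl] at this
    exact_mod_cast this
  have hmle : (m : ℝ) ≤ (n : ℝ) := by
    have h1 : m < (n : ℤ) + 1 := by exact_mod_cast lt_trans hm hxlt
    exact_mod_cast (by omega : m ≤ (n : ℤ))
  have hd1 : (d : ℝ) = 1 := by
    have hdge1 : (1 : ℤ) ≤ d := by exact_mod_cast (by exact_mod_cast hdpos : (0 : ℤ) < d)
    by_contra hne
    have hdge2 : (2 : ℝ) ≤ (d : ℝ) := by
      have : (1 : ℤ) ≠ d := fun h => hne (by rw [← h]; norm_num)
      exact_mod_cast (by omega : (2 : ℤ) ≤ d)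
    have h4 : 2 * (n : ℝ) * (d : ℝ) ≤ x + (m : ℝ) := by
      rw [← heq]; exact mul_le_mul_of_nonneg_right hge hdpos.le
    nlinarith [h4, hxlt, hmle, hn1, hdge2]
  have hmn : (m : ℝ) = (n : ℝ) := by
    have h4 : 2 * (n : ℝ) ≤ x + (m : ℝ) := by
      rw [← heq, hd1, mul_one]; exact hge
    have h1 : (n : ℝ) - 1 < (m : ℝ) := by linarith
    have h2 : (n : ℤ) - 1 < m := by exact_mod_cast h1
    have h3 : m ≤ (n : ℤ) := by exact_mod_cast hmle
    have : m = (n : ℤ) := by omega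
    exact_mod_cast this
  have hXfinal : cfX x (p + 1) = x + (n : ℝ) := by
    have := heq
    rw [hd1, hmn] at this
    simpa using this
  -- the Fibonacci identity via a second induction
  have Dmain : ∀ k, 1 ≤ k → k ≤ p + 1 →
      x * (cfX x k * ((Gfib (k + 1) : ℝ)) + (Gfib k : ℝ)) =
        cfX x k * ((n : ℝ) * (Gfib (k + 1) : ℝ) + (Gfib k : ℝ)) +
          ((n : ℝ) * (Gfib k : ℝ) + (Gfib (k - 1) : ℝ)) := by
    intro k hk
    induction k, hk using Nat.le_induction with
    | base =>
      intro _
      have hne : x - (n : ℝ) ≠ 0 := sub_ne_zero.mpr (hxnotint n)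
      have h1 : cfX x 1 = 1 / (x - (n : ℝ)) := by
        rw [hrec 0 (Nat.zero_le p), hc0, hfloor0]
        push_cast
        ring
      have hX1 : cfX x 1 * (x - (n : ℝ)) = 1 := by
        rw [h1]; field_simp
      show x * (cfX x 1 * ((Gfib 2 : ℝ)) + (Gfib 1 : ℝ)) =
        cfX x 1 * ((n : ℝ) * (Gfib 2 : ℝ) + (Gfib 1 : ℝ)) +
          ((n : ℝ) * (Gfib 1 : ℝ) + (Gfib 0 : ℝ))
      have hG2 : (Gfib 2 : ℝ) = 1 := by norm_num [Gfib]
      have hG1 : (Gfib 1 : ℝ) = 0 := by norm_num [Gfib]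
      have hG0 : (Gfib 0 : ℝ) = 1 := by norm_num [Gfib]
      rw [hG2, hG1, hG0]
      linear_combination hX1
    | succ k hk ih =>
      intro hk2
      have hD := ih (by omega)
      have hfl : ⌊cfX x k⌋ = 1 := hones k (by omega) (by omega)
      have hnext : cfX x (k + 1) = 1 / (cfX x k - 1) := by
        rw [hrec k (by omega), hfl]
        norm_num
      have hfne : cfX x k - 1 ≠ 0 := by
        have := hfrac k (by omega)
        rw [hfl] at this
        simpa using this
      have hR : cfX x (k + 1) * (cfX x k - 1) = 1 := by
        rw [hnext]; field_simp
      have hG2 : (Gfib (k + 2) : ℝ) = (Gfib (k + 1) : ℝ) + (Gfib k : ℝ) := by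
        exact_mod_cast congrArg (Int.cast : ℤ → ℝ) (Gfib_add_two k)
      have hG1 : (Gfib (k + 1) : ℝ) = (Gfib k : ℝ) + (Gfib (k - 1) : ℝ) := by
        obtain ⟨k', rfl⟩ : ∃ k', k = k' + 1 := ⟨k - 1, by omega⟩
        exact_mod_cast congrArg (Int.cast : ℤ → ℝ) (Gfib_add_two k')
      have hsub : (k + 1) - 1 = k := by omega
      rw [hsub]
      linear_combination (cfX x (k + 1)) * hD
        - (x * (Gfib (k + 1) : ℝ) - (n : ℝ) * (Gfib (k + 1) : ℝ) - (Gfib k : ℝ)) * hR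
        - (cfX x (k + 1)) * hG1 + (x * cfX x (k + 1) - (n : ℝ) * cfX x (k + 1)) * hG2
  have hD := Dmain (p + 1) (by omega) le_rfl
  rw [hXfinal, (by omega : (p + 1) - 1 = p)] at hD
  have hkey : (j : ℝ) * (Gfib (p + 2) : ℝ) =
      2 * (n : ℝ) * (Gfib (p + 1) : ℝ) + (Gfib p : ℝ) := by
    linear_combination hD - (Gfib (p + 2) : ℝ) * hx2
  -- convert to a natural-number identity
  obtain ⟨q, rfl⟩ : ∃ q, p = q + 1 := ⟨p - 1, by omega⟩
  have hG2 : (Gfib (q + 3) : ℝ) = (Nat.fib (q + 2) : ℝ) := by norm_num [Gfib]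
  have hG1 : (Gfib (q + 2) : ℝ) = (Nat.fib (q + 1) : ℝ) := by norm_num [Gfib]
  have hG0 : (Gfib (q + 1) : ℝ) = (Nat.fib q : ℝ) := by norm_num [Gfib]
  rw [show q + 1 + 2 = q + 3 from rfl, show q + 1 + 1 = q + 2 from rfl, hG2, hG1, hG0] at hkey
  have hkeyN : j * Nat.fib (q + 2) = 2 * n * Nat.fib (q + 1) + Nat.fib q := by
    exact_mod_cast hkey
  constructor
  · intro h3
    have h2 : 2 ∣ Nat.fib (q + 2) := by
      have := Nat.fib_dvd 3 (q + 1 + 1) h3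
      simpa [show Nat.fib 3 = 2 by rfl] using this
    have h2j : 2 ∣ 2 * (n * Nat.fib (q + 1)) + Nat.fib q := by
      have : 2 ∣ j * Nat.fib (q + 2) := Dvd.dvd.mul_left h2 j
      rw [hkeyN] at this
      convert this using 2
      ring
    have h2q : 2 ∣ Nat.fib q := by omega
    have hgcd : Nat.fib (Nat.gcd (q + 2) q) = Nat.gcd (Nat.fib (q + 2)) (Nat.fib q) :=
      Nat.fib_gcd _ _
    have h2g : 2 ∣ Nat.fib (Nat.gcd (q + 2) q) := by
      rw [hgcd]
      exact Nat.dvd_gcd h2 h2q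
    have hgdvd : Nat.gcd (q + 2) q ∣ 2 := by
      have := Nat.dvd_sub (Nat.gcd_dvd_left (q + 2) q) (Nat.gcd_dvd_right (q + 2) q)
      simpa using this
    have hgpos : 0 < Nat.gcd (q + 2) q := Nat.gcd_pos_of_pos_left _ (by omega)
    have hgle : Nat.gcd (q + 2) q ≤ 2 := Nat.le_of_dvd (by norm_num) hgdvd
    have hcases : Nat.gcd (q + 2) q = 1 ∨ Nat.gcd (q + 2) q = 2 := by omega
    rcases hcases with h | h <;> rw [h] at h2g <;> revert h2g <;> decide
  · have hfne : ((fibP (q + 1 + 1) : ℚ)) ≠ 0 := by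
      have h : 0 < fibP (q + 1 + 1) := Nat.fib_pos.mpr (by omega)
      exact_mod_cast h.ne'
    rw [eq_div_iff hfne]
    show (j : ℚ) * (Nat.fib (q + 1 + 1) : ℚ) =
      2 * (n : ℚ) * (Nat.fib (q + 1) : ℚ) + (Nat.fib (q + 1 - 1) : ℚ)
    rw [show q + 1 - 1 = q from rfl]
    exact_mod_cast hkeyN
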